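/- For every positive integer k there exists a finite connected graph G such that Γρ(G) − χρ(G) ≥ k. -/

import Mathlib

open SimpleGraph

/-- A packing `k`-coloring of `G`: colors in `{1,…,k}` and vertices of equal color `i`
are at distance greater than `i` (vertices in different components are unconstrained). -/
def IsPackingColoring {V : Type*} (G : SimpleGraph V) (k : ℕ) (c : V → ℕ) : Prop :=
  (∀ v, 1 ≤ c v ∧ c v ≤ k) ∧
  ∀ u v, u ≠ v → c u = c v → G.Reachable u v → c u < G.dist u v

/-- A greedy packing `k`-coloring: a packing `k`-coloring that uses color `k` and in which
every vertex of color `i ≥ 2` has, for every `j < i`, a vertex of color `j`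
at distance at most `j`. -/
def IsGreedyPackingColoring {V : Type*} (G : SimpleGraph V) (k : ℕ) (c : V → ℕ) : Prop :=
  IsPackingColoring G k c ∧ (∃ v, c v = k) ∧
  ∀ v, ∀ j, 1 ≤ j → j < c v → ∃ u, c u = j ∧ G.Reachable u v ∧ G.dist u v ≤ j

/-- The Grundy packing chromatic number: the largest `k` admitting a greedy packing
`k`-coloring. -/
noncomputable def grundyPackingChromaticNumber {V : Type*} (G : SimpleGraph V) : ℕ :=
  sSup {k | ∃ c : V → ℕ, IsGreedyPackingColoring G k c}

/-- The packing chromatic number: the smallest `k` admitting a packing `k`-coloring. -/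
noncomputable def packingChromaticNumber {V : Type*} (G : SimpleGraph V) : ℕ :=
  sInf {k | ∃ c : V → ℕ, IsPackingColoring G k c}

/-- `s` is an independent set of `G`. -/
def IsIndepFinset {V : Type*} (G : SimpleGraph V) (s : Finset V) : Prop :=
  ∀ u ∈ s, ∀ v ∈ s, ¬ G.Adj u v

/-- `s` is a maximal independent set of `G`. -/
def IsMaxIndepFinset {V : Type*} (G : SimpleGraph V) (s : Finset V) : Prop :=
  IsIndepFinset G s ∧ ∀ t : Finset V, IsIndepFinset G t → s ⊆ t → s = t

/-- The independent domination number `i(G)`: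
the minimum cardinality of a maximal independent set. -/
noncomputable def indepDomNum {V : Type*} (G : SimpleGraph V) [Fintype V] : ℕ :=
  sInf {n | ∃ s : Finset V, IsMaxIndepFinset G s ∧ s.card = n}

/-- The graph `G^ℓ`: same vertices, `u ∼ v` iff `u ≠ v` and `d_G(u,v) ≤ ℓ`. -/
def distPow {V : Type*} (G : SimpleGraph V) (ℓ : ℕ) : SimpleGraph V where
  Adj u v := u ≠ v ∧ G.dist u v ≤ ℓ
  symm := by
    constructor
    rintro u v ⟨h1, h2⟩
    exact ⟨h1.symm, by rwa [SimpleGraph.dist_comm]⟩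
  loopless := by constructor; rintro v ⟨h, _⟩; exact h rfl

/-- The graph `G(k)`: vertex set is `k` disjoint copies of `V(G)`, the copy `i : Fin k`
playing the role of `G^(i+1)`; the `k` copies of each vertex form a clique, and within the
`i`-th copy two distinct vertices are adjacent iff their distance in `G` is at most `i+1`. -/
def levelGraph {V : Type*} (G : SimpleGraph V) (k : ℕ) : SimpleGraph (V × Fin k) where
  Adj p q := (p.1 = q.1 ∧ p.2 ≠ q.2) ∨
    (p.1 ≠ q.1 ∧ p.2 = q.2 ∧ G.dist p.1 q.1 ≤ (p.2 : ℕ) + 1)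
  symm := by
    constructor
    rintro p q (⟨h1, h2⟩ | ⟨h1, h2, h3⟩)
    · exact Or.inl ⟨h1.symm, h2.symm⟩
    · refine Or.inr ⟨h1.symm, h2.symm, ?_⟩
      rw [SimpleGraph.dist_comm, ← h2]
      exact h3
  loopless := by constructor; rintro p (⟨_, h⟩ | ⟨h, _, _⟩) <;> exact h rfl

/-- `A` is a maximal independent set of the subgraph of `H` induced on `S`. -/
def IsMaxIndepSetOn {V : Type*} (H : SimpleGraph V) (S : Set V) (A : Set V) : Prop :=
  A ⊆ S ∧ (∀ u ∈ A, ∀ v ∈ A, ¬ H.Adj u v) ∧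
  ∀ B : Set V, B ⊆ S → (∀ u ∈ B, ∀ v ∈ B, ¬ H.Adj u v) → A ⊆ B → A = B

/-- The eccentricity of a vertex. -/
noncomputable def eccent {V : Type*} (G : SimpleGraph V) [Fintype V] (v : V) : ℕ :=
  Finset.univ.sup (fun u => G.dist v u)

/-- The radius of a graph. -/
noncomputable def graphRadius {V : Type*} (G : SimpleGraph V) [Fintype V] : ℕ :=
  sInf (Set.range (eccent G))

/-- The diameter of a graph. -/
noncomputable def graphDiam {V : Type*} (G : SimpleGraph V) [Fintype V] : ℕ :=
  Finset.univ.sup (eccent G)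

/-- The diametrical graph `D(G)`: `x ∼ y` iff `d_G(x,y) = diam(G)`. -/
noncomputable def diamGraph {V : Type*} (G : SimpleGraph V) [Fintype V] : SimpleGraph V where
  Adj u v := u ≠ v ∧ G.dist u v = graphDiam G
  symm := by
    constructor
    rintro u v ⟨h1, h2⟩
    exact ⟨h1.symm, by rwa [SimpleGraph.dist_comm]⟩
  loopless := by constructor; rintro v ⟨h, _⟩; exact h rfl

/-- `Q` is a clique of the subgraph of `H` induced on `S`. -/
def IsCliqueFinsetOn {V : Type*} (H : SimpleGraph V) (S : Set V) (Q : Finset V) : Prop :=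
  ↑Q ⊆ S ∧ ∀ u ∈ Q, ∀ v ∈ Q, u ≠ v → H.Adj u v

/-- `Q` is a maximal clique of the subgraph of `H` induced on `S`. -/
def IsMaxCliqueFinsetOn {V : Type*} (H : SimpleGraph V) (S : Set V) (Q : Finset V) : Prop :=
  IsCliqueFinsetOn H S Q ∧ ∀ R : Finset V, IsCliqueFinsetOn H S R → Q ⊆ R → Q = R

/-- The join `G ∨ H` of two graphs. -/
def joinGraph {V W : Type*} (G : SimpleGraph V) (H : SimpleGraph W) :
    SimpleGraph (V ⊕ W) where
  Adj p q := match p, q with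
    | .inl u, .inl v => G.Adj u v
    | .inr u, .inr v => H.Adj u v
    | .inl _, .inr _ => True
    | .inr _, .inl _ => True
  symm := by
    constructor
    rintro (u | u) (v | v) h
    · exact h.symm
    · trivial
    · trivial
    · exact h.symm
  loopless := by
    constructor
    rintro (u | u) h
    · exact G.irrefl h
    · exact H.irrefl h

/-- `K_{n,n}` minus a perfect matching: parts `{u_i}` and `{v_i}`, with `u_i ∼ v_j` iff
`i ≠ j`. -/
def completeBipartiteMinusMatching (n : ℕ) : SimpleGraph (Fin n ⊕ Fin n) where
  Adj p q := match p, q with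
    | .inl i, .inr j => i ≠ j
    | .inr i, .inl j => i ≠ j
    | _, _ => False
  symm := by constructor; rintro (i | i) (j | j) h <;> first | exact h.symm | exact h
  loopless := by constructor; rintro (i | i) h <;> exact h


/-- star graph on `Fin (k+2)`, center `0` -/
def starG (k : ℕ) : SimpleGraph (Fin (k+2)) where
  Adj u v := u ≠ v ∧ (u = 0 ∨ v = 0)
  symm := by constructor; rintro u v ⟨h1, h2⟩; exact ⟨h1.symm, h2.symm⟩
  loopless := by constructor; rintro v ⟨h, _⟩; exact h rfl

lemma starG_adj (k : ℕ) (v : Fin (k+2)) (hv : v ≠ 0) : (starG k).Adj 0 v :=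
  ⟨Ne.symm hv, Or.inl rfl⟩

lemma starG_conn (k : ℕ) : (starG k).Connected := by
  rw [connected_iff]
  refine ⟨fun u v => ?_, ⟨0⟩⟩
  have h0 : ∀ w : Fin (k+2), (starG k).Reachable 0 w := by
    intro w
    by_cases hw : w = 0
    · subst hw; rfl
    · exact (starG_adj k w hw).reachable
  exact (h0 u).symm.trans (h0 v)

lemma starG_dist_le_two (k : ℕ) (u v : Fin (k+2)) : (starG k).dist u v ≤ 2 := by
  by_cases huv : u = v
  · subst huv; rw [SimpleGraph.dist_self]; omega
  by_cases hu : u = 0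
  · subst hu
    rw [SimpleGraph.dist_eq_one_iff_adj.mpr (starG_adj k v (Ne.symm huv))]; omega
  by_cases hv : v = 0
  · subst hv
    have h1 : (starG k).dist u 0 = 1 :=
      SimpleGraph.dist_eq_one_iff_adj.mpr ((starG_adj k u hu).symm)
    omega
  · calc (starG k).dist u v
        ≤ (((starG_adj k u hu).symm.toWalk).append (starG_adj k v hv).toWalk).length :=
          SimpleGraph.dist_le _
      _ = 2 := by simp

/-- greedy coloring of the star -/
def gc (k : ℕ) (v : Fin (k+2)) : ℕ := if v = 0 then 1 else v.val + 1

lemma gc_zero (k : ℕ) : gc k 0 = 1 := rfl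

lemma gc_ne (k : ℕ) (v : Fin (k+2)) (hv : v ≠ 0) : gc k v = v.val + 1 := if_neg hv

/-- cheap 2-coloring of the star -/
def pc (k : ℕ) (v : Fin (k+2)) : ℕ := if v = 0 then 2 else 1

lemma pc_zero (k : ℕ) : pc k 0 = 2 := rfl

lemma pc_ne (k : ℕ) (v : Fin (k+2)) (hv : v ≠ 0) : pc k v = 1 := if_neg hv

lemma grundy_mem_le_card {V : Type*} [Fintype V] (G : SimpleGraph V) (m : ℕ)
    (hm : m ∈ {k | ∃ c : V → ℕ, IsGreedyPackingColoring G k c}) : m ≤ Fintype.card V := by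
  obtain ⟨c, ⟨hrange, _⟩, ⟨v, hv⟩, hgreedy⟩ := hm
  have hf : ∀ i : Fin m, ∃ u : V, c u = i.val + 1 := by
    intro i
    by_cases h : i.val + 1 = m
    · exact ⟨v, by rw [hv, h]⟩
    · have hlt : i.val + 1 < c v := by have := i.isLt; omega
      obtain ⟨u, hu, _⟩ := hgreedy v (i.val + 1) (by omega) hlt
      exact ⟨u, hu⟩
  choose f hfc using hf
  have hinj : Function.Injective f := by
    intro i j hij
    have h1 := hfc i
    rw [hij, hfc j] at h1
    exact Fin.ext (by omega)
  simpa using Fintype.card_le_of_injective f hinj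

/-- For every positive integer `k` there exists a finite connected graph `G`
with `Γρ(G) - χρ(G) ≥ k`. -/
theorem exists_graph_grundy_sub_packing_ge (k : ℕ) (hk : 1 ≤ k) :
    ∃ (V : Type) (_ : Fintype V) (G : SimpleGraph V), G.Connected ∧
      k ≤ grundyPackingChromaticNumber G - packingChromaticNumber G := by
  refine ⟨Fin (k+2), inferInstance, starG k, starG_conn k, ?_⟩
  have hbdd : BddAbove {n | ∃ c : Fin (k+2) → ℕ, IsGreedyPackingColoring (starG k) n c} :=
    ⟨Fintype.card (Fin (k+2)), fun m hm => grundy_mem_le_card _ m hm⟩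
  have hpack : packingChromaticNumber (starG k) ≤ 2 := by
    apply Nat.sInf_le
    refine ⟨pc k, ⟨fun v => ?_, ?_⟩⟩
    · by_cases hv : v = 0
      · rw [hv, pc_zero]; omega
      · rw [pc_ne k v hv]; omega
    · intro u v huv hc hr
      by_cases hu : u = 0
      · subst hu
        by_cases hv : v = 0
        · exact absurd hv.symm huv
        · rw [pc_zero, pc_ne k v hv] at hc; omega
      · by_cases hv : v = 0
        · rw [pc_ne k u hu, hv, pc_zero] at hc; omega
        · rw [pc_ne k u hu]
          have h1 : 0 < (starG k).dist u v := hr.pos_dist_of_ne huv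
          have h2 : (starG k).dist u v ≠ 1 := by
            intro h
            rcases SimpleGraph.dist_eq_one_iff_adj.mp h with ⟨_, h0 | h0⟩
            · exact hu h0
            · exact hv h0
          omega
  have hgrundy : k + 2 ≤ grundyPackingChromaticNumber (starG k) := by
    apply le_csSup hbdd
    have hcinj : Function.Injective (gc k) := by
      intro u v huv
      by_cases hu : u = 0 <;> by_cases hv : v = 0
      · rw [hu, hv]
      · rw [hu, gc_zero, gc_ne k v hv] at huv
        exact absurd (Fin.ext (show u.val = v.val by rw [hu]; simp; omega)) (hu ▸ (Ne.symm hv))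
      · rw [gc_ne k u hu, hv, gc_zero] at huv
        exact absurd (Fin.ext (show u.val = (0 : Fin (k+2)).val by rw [Fin.val_zero]; omega)) hu
      · rw [gc_ne k u hu, gc_ne k v hv] at huv
        exact Fin.ext (by omega)
    have hcle : ∀ v : Fin (k+2), gc k v ≤ k + 2 := by
      intro v
      by_cases hv : v = 0
      · rw [hv, gc_zero]; omega
      · rw [gc_ne k v hv]; have := v.isLt; omega
    refine ⟨gc k, ⟨⟨fun v => ?_, fun u v huv hcc _ => absurd (hcinj hcc) huv⟩, ?_, ?_⟩⟩
    · refine ⟨?_, hcle v⟩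
      by_cases hv : v = 0
      · rw [hv, gc_zero]
      · rw [gc_ne k v hv]; omega
    · have hne : (⟨k+1, by omega⟩ : Fin (k+2)) ≠ 0 := by
        intro h
        rw [Fin.ext_iff] at h
        simp at h
      exact ⟨⟨k+1, by omega⟩, by rw [gc_ne k _ hne]⟩
    · intro v j hj1 hjv
      by_cases hj : j = 1
      · subst hj
        have hv0 : v ≠ 0 := by
          intro h; rw [h, gc_zero] at hjv; omega
        refine ⟨0, gc_zero k, (starG_adj k v hv0).reachable, ?_⟩
        rw [SimpleGraph.dist_eq_one_iff_adj.mpr (starG_adj k v hv0)]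
      · have hjk : j - 1 < k + 2 := by have := hcle v; omega
        have hne : (⟨j-1, hjk⟩ : Fin (k+2)) ≠ 0 := by
          intro h
          rw [Fin.ext_iff] at h
          simp at h
          omega
        refine ⟨⟨j-1, hjk⟩, ?_, (starG_conn k).preconnected _ _, ?_⟩
        · rw [gc_ne k _ hne]; simp; omega
        · have := starG_dist_le_two k (⟨j-1, hjk⟩ : Fin (k+2)) v
          omega
  omega
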